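/- Let B be a finite group, let A be a subgroup of B, let α be an automorphism of A, let β be an automorphism of B with β(A) = A, and let n ≥ 1 be such that αⁿ(x) = β(x) for all x ∈ A. Then there exist a finite group C, an injective group homomorphism e : B → C, and an automorphism γ of C such that γ(e(x)) = e(α(x)) for all x ∈ A and γⁿ(e(y)) = e(β(y)) for all y ∈ B. -/

import Mathlib

set_option linter.unusedVariables false
set_option linter.unusedSectionVars false
set_option maxHeartbeats 1000000

namespace RootExtAux

open SemidirectProduct

variable {B : Type} [Group B] [Finite B] (β : MulAut B)

instance : Finite (MulAut B) :=
  Finite.of_injective (fun f => (f : B → B)) DFunLike.coe_injective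

abbrev KK : Subgroup (MulAut B) := Subgroup.zpowers β
abbrev GG := B ⋊[(KK β).subtype] (KK β)

instance : Finite (GG β) :=
  Finite.of_injective (fun g => (g.left, g.right))
    (fun a b h => SemidirectProduct.ext (congrArg Prod.fst h) (congrArg Prod.snd h))

def uu : KK β := ⟨β, Subgroup.mem_zpowers β⟩
def tt : GG β := inr (uu β)

lemma t_pow (m : ℕ) : (tt β) ^ m = inr ((uu β) ^ m) := (map_pow inr (uu β) m).symm

lemma t_pow_inl (m : ℕ) (b : B) :
    (tt β) ^ m * inl b * ((tt β) ^ m)⁻¹ = inl ((β ^ m) b) := by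
  rw [t_pow, ← map_inv]
  have h := (inl_aut (φ := (KK β).subtype) ((uu β) ^ m) b).symm
  simpa [uu] using h

lemma t_inl (b : B) : (tt β) * inl b * (tt β)⁻¹ = inl (β b) := by
  simpa using t_pow_inl β 1 b

lemma t_pow_order : (tt β) ^ (orderOf β) = 1 := by
  rw [t_pow]
  have : (uu β) ^ (orderOf β) = 1 := by
    ext1; push_cast [uu]; exact pow_orderOf_eq_one β
  rw [this, map_one]

lemma inl_mul_t_pow (m : ℕ) (b : B) :
    inl b * (tt β) ^ m = (tt β) ^ m * inl (((β⁻¹) ^ m) b) := by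
  have h := t_pow_inl β m (((β⁻¹) ^ m) b)
  have h2 : (β ^ m) (((β⁻¹) ^ m) b) = b := by
    rw [inv_pow, ← MulAut.mul_apply, mul_inv_cancel, MulAut.one_apply]
  rw [h2] at h
  rw [← h]; group

variable (A : Subgroup B)

lemma mem_of (hβA : Subgroup.map β.toMonoidHom A = A) {x : B} (hx : x ∈ A) : β x ∈ A := by
  rw [← hβA]; exact Subgroup.mem_map_of_mem _ hx

lemma mem_inv (hβA : Subgroup.map β.toMonoidHom A = A) {x : B} (hx : x ∈ A) : β⁻¹ x ∈ A := by
  rw [← hβA] at hx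
  obtain ⟨y, hy, rfl⟩ := hx
  have : β⁻¹ (β.toMonoidHom y) = y := by
    show β⁻¹ (β y) = y
    rw [← MulAut.mul_apply, inv_mul_cancel, MulAut.one_apply]
  rw [this]; exact hy

lemma mem_inv_pow (hβA : Subgroup.map β.toMonoidHom A = A) (m : ℕ) {x : B} (hx : x ∈ A) : ((β⁻¹) ^ m) x ∈ A := by
  induction m with
  | zero => simpa using hx
  | succ p ih =>
      have : ((β⁻¹) ^ (p + 1)) x = β⁻¹ (((β⁻¹) ^ p) x) := by
        rw [pow_succ', MulAut.mul_apply]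
      rw [this]; exact mem_inv β A hβA ih

/-- The subgroup `H = ⟨t⟩ · A` of `G`. -/
def HH (hβA : Subgroup.map β.toMonoidHom A = A) : Subgroup (GG β) where
  carrier := {g | ∃ (m : ℕ) (x : B), x ∈ A ∧ g = (tt β) ^ m * inl x}
  one_mem' := ⟨0, 1, A.one_mem, by simp⟩
  mul_mem' := by
    rintro g g' ⟨m, x, hx, rfl⟩ ⟨m', x', hx', rfl⟩
    refine ⟨m + m', ((β⁻¹) ^ m') x * x', A.mul_mem (mem_inv_pow β A hβA m' hx) hx', ?_⟩
    rw [pow_add, map_mul]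
    calc (tt β) ^ m * inl x * ((tt β) ^ m' * inl x')
        = (tt β) ^ m * (inl x * (tt β) ^ m') * inl x' := by group
      _ = (tt β) ^ m * ((tt β) ^ m' * inl (((β⁻¹) ^ m') x)) * inl x' := by
          rw [inl_mul_t_pow]
      _ = (tt β) ^ m * (tt β) ^ m' * (inl (((β⁻¹) ^ m') x) * inl x') := by group
  inv_mem' := by
    rintro g ⟨m, x, hx, rfl⟩
    set k := orderOf β with hk
    have hk1 : 1 ≤ k := orderOf_pos β
    refine ⟨m * (k - 1), ((β⁻¹) ^ (m * (k - 1))) x⁻¹,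
      mem_inv_pow β A hβA _ (A.inv_mem hx), ?_⟩
    have htk : (tt β) ^ (m * k) = 1 := by
      rw [mul_comm m k, pow_mul, t_pow_order, one_pow]
    have hadd : m * (k - 1) + m = m * k := by
      have : k - 1 + 1 = k := Nat.succ_pred_eq_of_pos hk1
      calc m * (k - 1) + m = m * (k - 1 + 1) := by ring
        _ = m * k := by rw [this]
    have hβmk : ((β⁻¹) ^ m) (((β⁻¹) ^ (m * (k - 1))) x⁻¹) = x⁻¹ := by
      rw [← MulAut.mul_apply, ← pow_add]
      have : m + m * (k - 1) = m * k := by omega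
      rw [this, inv_pow, mul_comm m k, pow_mul]
      rw [pow_orderOf_eq_one β, one_pow, inv_one, MulAut.one_apply]
    symm
    rw [eq_inv_iff_mul_eq_one]
    calc (tt β) ^ (m * (k - 1)) * inl (((β⁻¹) ^ (m * (k - 1))) x⁻¹) * ((tt β) ^ m * inl x)
        = (tt β) ^ (m * (k - 1)) * (inl (((β⁻¹) ^ (m * (k - 1))) x⁻¹) * (tt β) ^ m) * inl x := by
          group
      _ = (tt β) ^ (m * (k - 1)) * ((tt β) ^ m * inl (((β⁻¹) ^ m) (((β⁻¹) ^ (m * (k - 1))) x⁻¹))) * inl x := by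
          rw [inl_mul_t_pow]
      _ = (tt β) ^ (m * (k - 1)) * ((tt β) ^ m * inl x⁻¹) * inl x := by rw [hβmk]
      _ = ((tt β) ^ (m * (k - 1)) * (tt β) ^ m) * (inl x⁻¹ * inl x) := by group
      _ = 1 := by rw [← pow_add, hadd, htk, ← map_mul, inv_mul_cancel, map_one, mul_one]

end RootExtAux

namespace RootExtAux

open SemidirectProduct

variable {B : Type} [Group B] [Finite B] (β : MulAut B) (A : Subgroup B)

lemma rightHom_tt : SemidirectProduct.rightHom (tt β) = uu β := rightHom_inr _

noncomputable def FF (hβA : Subgroup.map β.toMonoidHom A = A) (n : ℕ) :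
    (GG β ⧸ HH β A hβA) × ZMod (n * orderOf β) × A → GG β × ZMod n :=
  fun p => (p.1.out * (tt β) ^ (p.2.1.val / n) * inl (p.2.2 : B),
    ((p.2.1.val % n : ℕ) : ZMod n))

lemma F_inj (hβA : Subgroup.map β.toMonoidHom A = A) (n : ℕ) (hn : 0 < n) :
    Function.Injective (FF β A hβA n) := by
  haveI : NeZero (n * orderOf β) := ⟨Nat.mul_ne_zero hn.ne' (orderOf_pos β).ne'⟩
  rintro ⟨c, j, x⟩ ⟨c', j', x'⟩ h
  simp only [FF, Prod.mk.injEq] at h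
  obtain ⟨h1, h2⟩ := h
  have hq2 : j.val % n = j'.val % n := by
    have := congrArg ZMod.val h2
    rwa [ZMod.val_cast_of_lt (Nat.mod_lt _ hn), ZMod.val_cast_of_lt (Nat.mod_lt _ hn)] at this
  have hw : (tt β) ^ (j.val / n) * inl (x : B) ∈ HH β A hβA := ⟨_, _, x.2, rfl⟩
  have hw' : (tt β) ^ (j'.val / n) * inl (x' : B) ∈ HH β A hβA := ⟨_, _, x'.2, rfl⟩
  have h1' : c.out * ((tt β) ^ (j.val / n) * inl (x : B))
      = c'.out * ((tt β) ^ (j'.val / n) * inl (x' : B)) := by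
    simpa [mul_assoc] using h1
  have hc : c = c' := by
    have e1 : QuotientGroup.mk (c.out * ((tt β) ^ (j.val / n) * inl (x : B))) = c := by
      rw [QuotientGroup.mk_mul_of_mem _ hw, QuotientGroup.out_eq']
    have e2 : QuotientGroup.mk (c'.out * ((tt β) ^ (j'.val / n) * inl (x' : B))) = c' := by
      rw [QuotientGroup.mk_mul_of_mem _ hw', QuotientGroup.out_eq']
    rw [← e1, h1', e2]
  subst hc
  have h1'' : (tt β) ^ (j.val / n) * inl (x : B) = (tt β) ^ (j'.val / n) * inl (x' : B) :=
    mul_left_cancel h1'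
  have hr := congrArg SemidirectProduct.rightHom h1''
  rw [map_mul, map_mul, rightHom_inl, rightHom_inl, mul_one, mul_one,
    map_pow, map_pow, rightHom_tt] at hr
  have huβ : β ^ (j.val / n) = β ^ (j'.val / n) := by
    have := congrArg (Subtype.val) hr
    push_cast [uu] at this
    exact this
  have hltj : j.val / n < orderOf β := Nat.div_lt_of_lt_mul (ZMod.val_lt j)
  have hltj' : j'.val / n < orderOf β := Nat.div_lt_of_lt_mul (ZMod.val_lt j')
  have hd : j.val / n = j'.val / n := by
    have hmod := pow_eq_pow_iff_modEq.mp huβ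
    unfold Nat.ModEq at hmod
    rwa [Nat.mod_eq_of_lt hltj, Nat.mod_eq_of_lt hltj'] at hmod
  rw [hd] at h1''
  have hx : (x : B) = (x' : B) := inl_injective (mul_left_cancel h1'')
  have hj : j = j' := by
    apply ZMod.val_injective
    rw [← Nat.div_add_mod j.val n, ← Nat.div_add_mod j'.val n, hd, hq2]
  exact Prod.ext rfl (Prod.ext hj (Subtype.ext hx))

end RootExtAux

namespace RootExtAux

open SemidirectProduct

variable {B : Type} [Group B] [Finite B] (β : MulAut B) (A : Subgroup B)

lemma F_surj (hβA : Subgroup.map β.toMonoidHom A = A) (n : ℕ) (hn : 0 < n) :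
    Function.Surjective (FF β A hβA n) := by
  haveI : NeZero n := ⟨hn.ne'⟩
  haveI : NeZero (n * orderOf β) := ⟨Nat.mul_ne_zero hn.ne' (orderOf_pos β).ne'⟩
  rintro ⟨g, s⟩
  set k := orderOf β with hk
  have hk0 : 0 < k := orderOf_pos β
  set c : GG β ⧸ HH β A hβA := QuotientGroup.mk g with hc
  have hmem : c.out⁻¹ * g ∈ HH β A hβA := by
    rw [← QuotientGroup.eq]
    rw [QuotientGroup.out_eq']
  obtain ⟨m, x, hxA, hfact⟩ := hmem
  have hpowm : (tt β) ^ m = (tt β) ^ (m % k) := by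
    conv_lhs => rw [← Nat.div_add_mod m k]
    rw [pow_add, pow_mul, t_pow_order, one_pow, one_mul]
  set d := m % k with hd
  have hdlt : d < k := Nat.mod_lt _ hk0
  have hsval : s.val < n := ZMod.val_lt s
  have hjlt : d * n + s.val < n * k := by
    have h1 : d * n + s.val < (d + 1) * n := by rw [Nat.succ_mul]; omega
    have h2 : (d + 1) * n ≤ k * n := Nat.mul_le_mul_right n hdlt
    rw [mul_comm n k]
    exact lt_of_lt_of_le h1 h2
  set j : ZMod (n * k) := ((d * n + s.val : ℕ) : ZMod (n * k)) with hj
  have hjval : j.val = d * n + s.val := ZMod.val_cast_of_lt hjlt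
  refine ⟨⟨c, j, ⟨x, hxA⟩⟩, ?_⟩
  have hdiv : j.val / n = d := by
    rw [hjval, mul_comm d n, Nat.mul_add_div hn, Nat.div_eq_of_lt hsval, Nat.add_zero]
  have hmod : j.val % n = s.val := by
    rw [hjval, mul_comm d n, Nat.mul_add_mod, Nat.mod_eq_of_lt hsval]
  have e1 : c.out * (tt β) ^ (j.val / n) * inl ((⟨x, hxA⟩ : A) : B) = g := by
    rw [hdiv, ← hpowm]
    have : (tt β) ^ m * inl x = c.out⁻¹ * g := hfact.symm
    rw [mul_assoc, this, ← mul_assoc, mul_inv_cancel, one_mul]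
  have e2 : ((j.val % n : ℕ) : ZMod n) = s := by
    rw [hmod]; exact ZMod.natCast_rightInverse s
  exact Prod.ext e1 e2

noncomputable def Psi (hβA : Subgroup.map β.toMonoidHom A = A) (n : ℕ) (hn : 0 < n) :
    ((GG β ⧸ HH β A hβA) × ZMod (n * orderOf β) × A) ≃ (GG β × ZMod n) :=
  Equiv.ofBijective (FF β A hβA n) ⟨F_inj β A hβA n hn, F_surj β A hβA n hn⟩

lemma Psi_apply (hβA : Subgroup.map β.toMonoidHom A = A) (n : ℕ) (hn : 0 < n) (p) :
    Psi β A hβA n hn p = FF β A hβA n p := rfl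

end RootExtAux

namespace RootExtAux

open SemidirectProduct

variable {B : Type} [Group B] [Finite B] (β : MulAut B) (A : Subgroup B)

lemma digit_mod (n : ℕ) (hn : 0 < n) (j : ZMod (n * orderOf β)) :
    (j - (n : ZMod (n * orderOf β))).val % n = j.val % n := by
  have hk0 : 0 < orderOf β := orderOf_pos β
  haveI : NeZero (n * orderOf β) := ⟨Nat.mul_ne_zero hn.ne' hk0.ne'⟩
  set a := (j - (n : ZMod (n * orderOf β))).val with ha
  have hjv : j.val = (a + (n : ZMod (n * orderOf β)).val) % (n * orderOf β) := by
    conv_lhs => rw [show j = (j - (n : ZMod (n * orderOf β))) + (n : ZMod (n * orderOf β)) by ring]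
    rw [ZMod.val_add]
  have hdvd : n ∣ n * orderOf β := ⟨orderOf β, rfl⟩
  rw [hjv, Nat.mod_mod_of_dvd _ hdvd, ZMod.val_natCast, Nat.add_mod,
    Nat.mod_mod_of_dvd _ hdvd, Nat.mod_self, Nat.add_zero, Nat.mod_mod_of_dvd _ (dvd_refl n)]

lemma digit_div (n : ℕ) (hn : 0 < n) (j : ZMod (n * orderOf β)) :
    (tt β) ^ ((j - (n : ZMod (n * orderOf β))).val / n) * tt β = (tt β) ^ (j.val / n) := by
  have hk0 : 0 < orderOf β := orderOf_pos β
  haveI : NeZero (n * orderOf β) := ⟨Nat.mul_ne_zero hn.ne' hk0.ne'⟩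
  by_cases hk1 : orderOf β = 1
  · have hβ1 : β = 1 := orderOf_eq_one_iff.mp hk1
    have htt : tt β = 1 := by
      have hu : uu β = 1 := Subtype.ext (by simp [uu, hβ1])
      rw [tt, hu, map_one]
    simp [htt]
  · have hk2 : 2 ≤ orderOf β := by omega
    set a := (j - (n : ZMod (n * orderOf β))).val with ha
    have hjv : j.val = (a + (n : ZMod (n * orderOf β)).val) % (n * orderOf β) := by
      conv_lhs => rw [show j = (j - (n : ZMod (n * orderOf β))) + (n : ZMod (n * orderOf β)) by ring]
      rw [ZMod.val_add]
    have hnM : n < n * orderOf β := by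
      have h := (Nat.mul_lt_mul_left hn).mpr (show 1 < orderOf β by omega)
      simpa using h
    have hnvM : (n : ZMod (n * orderOf β)).val = n := by
      rw [ZMod.val_natCast, Nat.mod_eq_of_lt hnM]
    rw [hnvM] at hjv
    have haM : a < n * orderOf β := ZMod.val_lt _
    by_cases hcase : a + n < n * orderOf β
    · have hjv2 : j.val = a + n := by rw [hjv, Nat.mod_eq_of_lt hcase]
      rw [hjv2, Nat.add_div_right _ hn, pow_succ]
    · push_neg at hcase
      have hjv2 : j.val = a + n - n * orderOf β := by
        rw [hjv, Nat.mod_eq_sub_mod hcase, Nat.mod_eq_of_lt (by omega)]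
      have hjlt : j.val < n := by omega
      have hdiv0 : j.val / n = 0 := Nat.div_eq_of_lt hjlt
      have hmulsub : n * (orderOf β - 1) + n = n * orderOf β := by
        cases' Nat.exists_eq_succ_of_ne_zero hk0.ne' with kk hkk
        rw [hkk, Nat.succ_sub_one, Nat.mul_succ]
      have halow : n * (orderOf β - 1) ≤ a := by omega
      have hadiv : a / n = orderOf β - 1 := by
        have hge : orderOf β - 1 ≤ a / n := (Nat.le_div_iff_mul_le hn).mpr (by rw [mul_comm]; omega)
        have hlt : a / n < orderOf β := Nat.div_lt_of_lt_mul haM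
        omega
      rw [hdiv0, hadiv, pow_zero]
      have : (tt β) ^ (orderOf β - 1) * tt β = (tt β) ^ (orderOf β) := by
        rw [← pow_succ]
        congr 1
        omega
      rw [this, t_pow_order]

noncomputable def phi0 (hβA : Subgroup.map β.toMonoidHom A = A) (α : MulAut A) (n : ℕ) :
    Equiv.Perm ((GG β ⧸ HH β A hβA) × ZMod (n * orderOf β) × A) where
  toFun p := (p.1, p.2.1 - 1, α p.2.2)
  invFun p := (p.1, p.2.1 + 1, α⁻¹ p.2.2)
  left_inv := by rintro ⟨c, j, x⟩; simp
  right_inv := by rintro ⟨c, j, x⟩; simp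

lemma phi0_pow (hβA : Subgroup.map β.toMonoidHom A = A) (α : MulAut A) (n : ℕ) (m : ℕ) (p) :
    ((phi0 β A hβA α n) ^ m) p = (p.1, p.2.1 - (m : ZMod (n * orderOf β)), (α ^ m) p.2.2) := by
  induction m generalizing p with
  | zero => simp
  | succ q ih =>
      rw [pow_succ, Equiv.Perm.mul_apply, ih ((phi0 β A hβA α n) p)]
      show ((p.1, p.2.1 - 1 - (q : ZMod (n * orderOf β)), (α ^ q) (α p.2.2)) : _)
        = (p.1, p.2.1 - ((q + 1 : ℕ) : ZMod (n * orderOf β)), (α ^ (q + 1)) p.2.2)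
      refine Prod.ext rfl (Prod.ext ?_ ?_)
      · show p.2.1 - 1 - (q : ZMod (n * orderOf β)) = p.2.1 - ((q + 1 : ℕ) : ZMod (n * orderOf β))
        push_cast
        ring
      · show (α ^ q) (α p.2.2) = (α ^ (q + 1)) p.2.2
        rw [pow_succ, MulAut.mul_apply]

lemma permCongr_mul {σ τ : Type} (e : σ ≃ τ) (p q : Equiv.Perm σ) :
    e.permCongr (p * q) = e.permCongr p * e.permCongr q := by
  ext x
  simp [Equiv.permCongr_apply, Equiv.Perm.mul_apply]

lemma permCongr_pow {σ τ : Type} (e : σ ≃ τ) (p : Equiv.Perm σ) (m : ℕ) :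
    e.permCongr (p ^ m) = (e.permCongr p) ^ m := by
  induction m with
  | zero => ext x; simp
  | succ q ih => rw [pow_succ, pow_succ, permCongr_mul, ih]

end RootExtAux

open SemidirectProduct RootExtAux in
/-- **Taking roots of automorphisms of finite groups.**
Let `A ≤ B` be finite groups, `α` an automorphism of `A`, and `β` an automorphism of `B`
leaving `A` invariant such that `αⁿ = β ↾ A` for some `n ≥ 1`.  Then there exist a finite
group `C`, an embedding `e : B → C`, and an automorphism `γ` of `C` extending `α`
(through `e`) with `γⁿ` extending `β` (through `e`). -/
theorem root_extension_of_automorphism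
    (B : Type) [Group B] [Finite B] (A : Subgroup B)
    (α : MulAut A) (β : MulAut B)
    (hβA : Subgroup.map β.toMonoidHom A = A)
    (n : ℕ) (hn : 1 ≤ n)
    (hpow : ∀ x : A, ((α ^ n) x : B) = β (x : B)) :
    ∃ (C : Type) (_ : Group C) (_ : Finite C) (e : B →* C) (γ : MulAut C),
      Function.Injective e ∧
      (∀ x : A, γ (e (x : B)) = e (α x)) ∧
      (∀ y : B, (γ ^ n) (e y) = e (β y)) := by
  classical
  have hn0 : 0 < n := hn
  haveI : NeZero n := ⟨hn0.ne'⟩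
  have hk0 : 0 < orderOf β := orderOf_pos β
  haveI : NeZero (n * orderOf β) := ⟨Nat.mul_ne_zero hn0.ne' hk0.ne'⟩
  set Ψ := Psi β A hβA n hn0 with hΨ
  set φ₀ := phi0 β A hβA α n with hφ₀
  set φ : Equiv.Perm (GG β × ZMod n) := Ψ.permCongr φ₀ with hφ
  -- the embedding
  let e : B →* Equiv.Perm (GG β × ZMod n) := MonoidHom.mk' (fun b =>
      Equiv.prodCongr (Equiv.mulRight ((inl b : GG β)⁻¹)) (Equiv.refl _)) (by
    intro b b'
    ext p <;> simp [Equiv.prodCongr_apply, mul_assoc])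
  have he_apply : ∀ (b : B) (p : GG β × ZMod n), e b p = (p.1 * (inl b)⁻¹, p.2) := by
    intro b p; rfl
  have he_inj : Function.Injective e := by
    intro b b' h
    have h1 := congrArg (fun σ : Equiv.Perm (GG β × ZMod n) => (σ (1, 0)).1) h
    simp only [he_apply, one_mul] at h1
    exact inl_injective (inv_injective h1)
  -- transport lemma
  have hΨφ : ∀ q, φ (Ψ q) = Ψ (φ₀ q) := by
    intro q
    rw [hφ, Equiv.permCongr_apply, Equiv.symm_apply_apply]
  -- the A-equivariance of φ
  have key1 : ∀ (y : A) (p : GG β × ZMod n),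
      φ (p.1 * inl (y : B), p.2) = ((φ p).1 * inl ((α y : A) : B), (φ p).2) := by
    intro y p
    obtain ⟨⟨c, j, x⟩, rfl⟩ := Ψ.surjective p
    have hpair : ((Ψ (c, j, x)).1 * inl ((y : A) : B), (Ψ (c, j, x)).2) = Ψ (c, j, x * y) := by
      refine Prod.ext ?_ rfl
      show (Ψ (c, j, x)).1 * inl ((y : A) : B) = (Ψ (c, j, x * y)).1
      simp only [hΨ, Psi_apply, FF]
      rw [Subgroup.coe_mul, map_mul, mul_assoc]
    rw [hpair, hΨφ, hΨφ]
    show Ψ (c, j - 1, α (x * y)) = ((Ψ (c, j - 1, α x)).1 * inl ((α y : A) : B), (Ψ (c, j - 1, α x)).2)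
    refine Prod.ext ?_ rfl
    show (Ψ (c, j - 1, α (x * y))).1 = (Ψ (c, j - 1, α x)).1 * inl ((α y : A) : B)
    simp only [hΨ, Psi_apply, FF]
    rw [map_mul α, Subgroup.coe_mul, map_mul]
    group
  -- the n-th power of φ
  have hφn : ∀ p : GG β × ZMod n, (φ ^ n) p = (p.1 * (tt β)⁻¹, p.2) := by
    intro p
    obtain ⟨⟨c, j, x⟩, rfl⟩ := Ψ.surjective p
    have h1 : φ ^ n = Ψ.permCongr (φ₀ ^ n) := (permCongr_pow Ψ φ₀ n).symm
    rw [h1, Equiv.permCongr_apply, Equiv.symm_apply_apply, hφ₀, phi0_pow]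
    show Ψ (c, j - (n : ZMod (n * orderOf β)), (α ^ n) x)
      = ((Ψ (c, j, x)).1 * (tt β)⁻¹, (Ψ (c, j, x)).2)
    have hβx : (((α ^ n) x : A) : B) = β ((x : A) : B) := hpow x
    refine Prod.ext ?_ ?_
    · show (Ψ (c, j - (n : ZMod (n * orderOf β)), (α ^ n) x)).1 = (Ψ (c, j, x)).1 * (tt β)⁻¹
      simp only [hΨ, Psi_apply, FF]
      have hcomm : inl ((x : A) : B) * (tt β)⁻¹ = (tt β)⁻¹ * inl (β ((x : A) : B)) := by
        have ht := t_inl β ((x : A) : B)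
        calc inl ((x : A) : B) * (tt β)⁻¹
            = (tt β)⁻¹ * (tt β * inl ((x : A) : B) * (tt β)⁻¹) := by group
          _ = (tt β)⁻¹ * inl (β ((x : A) : B)) := by rw [ht]
      have hd := digit_div β n hn0 j
      have hd' : (tt β) ^ ((j - (n : ZMod (n * orderOf β))).val / n)
          = (tt β) ^ (j.val / n) * (tt β)⁻¹ := by
        rw [← hd]; group
      rw [hβx, hd']
      rw [mul_assoc _ (inl ((x : A) : B)) ((tt β)⁻¹), hcomm]
      group
    · show (((j - (n : ZMod (n * orderOf β))).val % n : ℕ) : ZMod n) = ((j.val % n : ℕ) : ZMod n)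
      exact congrArg _ (digit_mod β n hn0 j)
  -- assemble
  refine ⟨Equiv.Perm (GG β × ZMod n), inferInstance, ?_, e, MulAut.conj φ, he_inj, ?_, ?_⟩
  · exact Finite.of_injective (fun f => (f : GG β × ZMod n → GG β × ZMod n))
      (fun f g h => Equiv.coe_fn_injective h)
  · -- γ extends α
    intro x
    apply Equiv.ext
    intro p
    rw [MulAut.conj_apply, Equiv.Perm.mul_apply, Equiv.Perm.mul_apply]
    have hinv : (e ((x : A) : B)) ((φ⁻¹ : Equiv.Perm (GG β × ZMod n)) p)
        = ((φ⁻¹ p).1 * inl (((x⁻¹ : A) : A) : B), (φ⁻¹ p).2) := by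
      rw [he_apply, ← map_inv inl]
      rfl
    rw [hinv, key1 x⁻¹ (φ⁻¹ p)]
    have happ : φ (φ⁻¹ p) = p := Equiv.apply_symm_apply φ p
    rw [happ, he_apply]
    refine Prod.ext ?_ rfl
    show p.1 * inl ((α x⁻¹ : A) : B) = p.1 * (inl ((α x : A) : B))⁻¹
    rw [map_inv α, ← map_inv inl]
    rfl
  · -- γ^n extends β
    intro y
    have hpow' : (MulAut.conj φ) ^ n = MulAut.conj (φ ^ n) := (map_pow (MulAut.conj) φ n).symm
    rw [hpow', MulAut.conj_apply]
    apply Equiv.ext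
    intro p
    rw [Equiv.Perm.mul_apply, Equiv.Perm.mul_apply]
    have hinvn : ((φ ^ n)⁻¹ : Equiv.Perm (GG β × ZMod n)) p = (p.1 * tt β, p.2) := by
      have h2 : (φ ^ n) ((p.1 * tt β, p.2) : GG β × ZMod n) = p := by
        rw [hφn]
        refine Prod.ext ?_ rfl
        show p.1 * tt β * (tt β)⁻¹ = p.1
        group
      calc ((φ ^ n)⁻¹ : Equiv.Perm (GG β × ZMod n)) p
          = (φ ^ n)⁻¹ ((φ ^ n) ((p.1 * tt β, p.2) : GG β × ZMod n)) := by rw [h2]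
        _ = (p.1 * tt β, p.2) := Equiv.symm_apply_apply _ _
    rw [hinvn, he_apply, hφn, he_apply]
    refine Prod.ext ?_ rfl
    show p.1 * tt β * (inl y)⁻¹ * (tt β)⁻¹ = p.1 * (inl (β y))⁻¹
    have ht := t_inl β y
    have : (inl (β y) : GG β)⁻¹ = tt β * (inl y)⁻¹ * (tt β)⁻¹ := by
      rw [← ht]; group
    rw [this]; group
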